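/- Let x0 ≥ 1 and f : [x0, ∞) → ℝ be twice continuously differentiable with f, f', f'' > 0, and suppose that for all x0 ≤ x ≤ y ≤ 2x we have f''(x)/2 ≤ f''(y) ≤ f''(x). Then for all x ≥ 2x0 we have x·f''(x) ≤ 2·f'(x). -/
import Mathlib


theorem stmt_1 (x0 : ℝ) (f f' f'' : ℝ → ℝ)
    (hx0 : 1 ≤ x0)
    (hd1 : ∀ x ∈ Set.Ici x0, HasDerivAt f (f' x) x)
    (hd2 : ∀ x ∈ Set.Ici x0, HasDerivAt f' (f'' x) x)
    (hcont : ContinuousOn f'' (Set.Ici x0))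
    (hpos : ∀ x ∈ Set.Ici x0, 0 < f x ∧ 0 < f' x ∧ 0 < f'' x)
    (hdbl : ∀ x y : ℝ, x0 ≤ x → x ≤ y → y ≤ 2 * x → f'' x / 2 ≤ f'' y ∧ f'' y ≤ f'' x) :
    ∀ x : ℝ, 2 * x0 ≤ x → x * f'' x ≤ 2 * f' x := by
  intro x hx
  have ha : x0 ≤ x / 2 := by linarith
  have hab : x / 2 < x := by linarith
  obtain ⟨c, hc, hceq⟩ := exists_hasDerivAt_eq_slope f' f'' hab
    (fun y hy => (hd2 y (le_trans ha hy.1)).continuousAt.continuousWithinAt)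
    (fun y hy => hd2 y (le_trans ha hy.1.le))
  have hcx0 : x0 ≤ c := le_trans ha hc.1.le
  have h1 : f'' x ≤ f'' c := (hdbl c x hcx0 hc.2.le (by linarith [hc.1])).2
  have hfa : 0 < f' (x / 2) := (hpos _ ha).2.1
  have hxpos : (0:ℝ) < x := by linarith
  have heq : f'' c * (x - x / 2) = f' x - f' (x / 2) :=
    (eq_div_iff (by linarith)).mp hceq
  nlinarith [mul_le_mul_of_nonneg_left h1 hxpos.le]
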